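/- Let p > 2 and let A be a nonnegative symmetric matrix that is block diagonal with symmetric nonnegative blocks A₁, …, A_k (its components). Then λ^{(p)}(A) = (∑_{i=1}^k λ^{(p)}(A_i)^{p/(p−2)})^{(p−2)/p}, where λ^{(p)}(M) = max { xᵀMx : ‖x‖_p = 1 }. -/

import Mathlib

/-- The p-spectral radius λ^{(p)} of a real square matrix. -/
noncomputable def lamP {ι : Type*} [Fintype ι] (p : ℝ) (M : Matrix ι ι ℝ) : ℝ :=
  sSup {t : ℝ | ∃ x : ι → ℝ, (∑ i, |x i| ^ p) = 1 ∧
    t = ∑ i, ∑ j, M i j * x i * x j}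

open Finset Real


namespace S18

variable {ι : Type*} [Fintype ι]

/-- quadratic form -/
def Q (M : Matrix ι ι ℝ) (x : ι → ℝ) : ℝ := ∑ i, ∑ j, M i j * x i * x j

lemma lamP_def (p : ℝ) (M : Matrix ι ι ℝ) :
    lamP p M = sSup {t : ℝ | ∃ x : ι → ℝ, (∑ i, |x i| ^ p) = 1 ∧ t = Q M x} := rfl

lemma abs_le_one_of_sum {p : ℝ} (hp : 0 < p) {x : ι → ℝ}
    (hx : (∑ i, |x i| ^ p) = 1) (i : ι) : |x i| ≤ 1 := by
  have h1 : |x i| ^ p ≤ 1 := by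
    rw [← hx]
    exact Finset.single_le_sum (fun j _ => Real.rpow_nonneg (abs_nonneg _) p) (mem_univ i)
  by_contra h
  push_neg at h
  have : (1:ℝ) < |x i| ^ p := by
    calc (1:ℝ) = 1 ^ p := (Real.one_rpow p).symm
    _ < |x i| ^ p := Real.rpow_lt_rpow (by norm_num) h hp
  linarith

lemma bddAbove_set {p : ℝ} (hp : 0 < p) (M : Matrix ι ι ℝ) :
    BddAbove {t : ℝ | ∃ x : ι → ℝ, (∑ i, |x i| ^ p) = 1 ∧ t = Q M x} := by
  refine ⟨∑ i, ∑ j, |M i j|, ?_⟩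
  rintro t ⟨x, hx, rfl⟩
  refine Finset.sum_le_sum fun i _ => Finset.sum_le_sum fun j _ => ?_
  calc M i j * x i * x j ≤ |M i j * x i * x j| := le_abs_self _
    _ = |M i j| * |x i| * |x j| := by rw [abs_mul, abs_mul]
    _ ≤ |M i j| * 1 * 1 := by
        have h1 := abs_le_one_of_sum hp hx i
        have h2 := abs_le_one_of_sum hp hx j
        have := abs_nonneg (x i); have := abs_nonneg (x j); have := abs_nonneg (M i j)
        nlinarith [mul_nonneg this (abs_nonneg (x i))]
    _ = |M i j| := by ring

lemma Q_mem_le {p : ℝ} (hp : 0 < p) (M : Matrix ι ι ℝ) {x : ι → ℝ}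
    (hx : (∑ i, |x i| ^ p) = 1) : Q M x ≤ lamP p M :=
  le_csSup (bddAbove_set hp M) ⟨x, hx, rfl⟩

lemma lamP_empty [IsEmpty ι] (p : ℝ) (M : Matrix ι ι ℝ) : lamP p M = 0 := by
  rw [lamP_def]
  convert Real.sSup_empty
  rw [Set.eq_empty_iff_forall_notMem]
  rintro t ⟨x, hx, -⟩
  simp at hx

lemma lamP_nonneg [Nonempty ι] {p : ℝ} (hp : 0 < p) {M : Matrix ι ι ℝ}
    (hnn : ∀ a b, 0 ≤ M a b) : 0 ≤ lamP p M := by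
  classical
  obtain ⟨i₀⟩ := ‹Nonempty ι›
  set x : ι → ℝ := fun j => if j = i₀ then 1 else 0 with hxdef
  have hx : (∑ i, |x i| ^ p) = 1 := by
    rw [Finset.sum_eq_single i₀]
    · simp [hxdef]
    · intro b _ hb; simp [hxdef, hb, Real.zero_rpow hp.ne']
    · simp
  have hQ : Q M x = M i₀ i₀ := by
    rw [Q, Finset.sum_eq_single i₀]
    · rw [Finset.sum_eq_single i₀] <;> simp +contextual [hxdef]
    · intro b _ hb; simp +contextual [hxdef, hb]
    · simp
  exact le_trans (hnn i₀ i₀) (hQ ▸ Q_mem_le hp M hx)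

lemma Q_le {p : ℝ} (hp : 0 < p) {M : Matrix ι ι ℝ} (hl : 0 ≤ lamP p M) (z : ι → ℝ) :
    Q M z ≤ lamP p M * (∑ i, |z i| ^ p) ^ (2 / p) := by
  rcases eq_or_ne (∑ i, |z i| ^ p) 0 with h0 | h0
  · have hz : ∀ i, z i = 0 := by
      intro i
      have := (Finset.sum_eq_zero_iff_of_nonneg
        (fun j _ => Real.rpow_nonneg (abs_nonneg _) p)).mp h0 i (mem_univ i)
      have := Real.rpow_eq_zero_iff_of_nonneg (abs_nonneg (z i)) |>.mp this
      simpa using this.1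
    have : Q M z = 0 := by
      rw [Q]; refine Finset.sum_eq_zero fun i _ => Finset.sum_eq_zero fun j _ => ?_
      rw [hz i]; ring
    rw [this, h0, Real.zero_rpow (by positivity), mul_zero]
  · set s := ∑ i, |z i| ^ p with hs
    have hspos : 0 < s := lt_of_le_of_ne
      (Finset.sum_nonneg fun j _ => Real.rpow_nonneg (abs_nonneg _) p) (Ne.symm h0)
    set c := s ^ (1 / p) with hc
    have hcpos : 0 < c := Real.rpow_pos_of_pos hspos _
    have hcp : c ^ p = s := by
      rw [hc, ← Real.rpow_mul hspos.le, one_div, inv_mul_cancel₀ hp.ne', Real.rpow_one]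
    set w : ι → ℝ := fun i => z i / c with hw
    have hwx : (∑ i, |w i| ^ p) = 1 := by
      have : ∀ i, |w i| ^ p = |z i| ^ p / s := by
        intro i
        rw [hw]
        simp only [abs_div, abs_of_pos hcpos]
        rw [Real.div_rpow (abs_nonneg _) hcpos.le, hcp]
      simp_rw [this, ← Finset.sum_div, ← hs, div_self h0]
    have hQw : Q M w = Q M z / c ^ 2 := by
      rw [Q, Q, Finset.sum_div]
      refine Finset.sum_congr rfl fun i _ => ?_
      rw [Finset.sum_div]
      refine Finset.sum_congr rfl fun j _ => ?_
      rw [hw]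
      have : c ^ 2 ≠ 0 := by positivity
      field_simp
    have hle := Q_mem_le hp M hwx
    have hc2 : c ^ 2 = s ^ (2 / p) := by
      rw [hc, ← Real.rpow_natCast (s ^ (1/p)) 2, ← Real.rpow_mul hspos.le]
      norm_num
      rw [show p⁻¹ * 2 = 2/p by ring]
    rw [hQw, div_le_iff₀ (by positivity)] at hle
    calc Q M z ≤ lamP p M * c ^ 2 := hle
      _ = lamP p M * s ^ (2 / p) := by rw [hc2]

lemma lamP_attained [Nonempty ι] {p : ℝ} (hp : 0 < p) (M : Matrix ι ι ℝ) :
    ∃ x : ι → ℝ, (∑ i, |x i| ^ p) = 1 ∧ Q M x = lamP p M := by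
  classical
  set S : Set (ι → ℝ) := {x | (∑ i, |x i| ^ p) = 1} with hS
  have hcont1 : Continuous fun x : ι → ℝ => ∑ i, |x i| ^ p := by
    refine continuous_finset_sum _ fun i _ => ?_
    have habs : Continuous fun x : ι → ℝ => |x i| := (continuous_abs).comp (continuous_apply i)
    have : Continuous fun t : ℝ => t ^ p := by
      rw [continuous_iff_continuousAt]
      intro t
      exact Real.continuousAt_rpow_const t p (Or.inr hp.le)
    exact this.comp habs
  have hclosed : IsClosed S := isClosed_eq hcont1 continuous_const
  have hsub : S ⊆ Set.pi Set.univ fun _ : ι => Set.Icc (-1:ℝ) 1 := fun x hx i _ =>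
    abs_le.mp (abs_le_one_of_sum hp hx i)
  have hcpt : IsCompact S :=
    (isCompact_univ_pi fun _ => isCompact_Icc).of_isClosed_subset hclosed hsub
  have hne : S.Nonempty := by
    obtain ⟨i₀⟩ := ‹Nonempty ι›
    refine ⟨fun j => if j = i₀ then 1 else 0, ?_⟩
    rw [Set.mem_setOf_eq, Finset.sum_eq_single i₀]
    · simp
    · intro b _ hb; simp [hb, Real.zero_rpow hp.ne']
    · simp
  have hQc : Continuous (Q M) := by
    refine continuous_finset_sum _ fun i _ => continuous_finset_sum _ fun j _ => ?_
    exact (continuous_const.mul (continuous_apply i)).mul (continuous_apply j)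
  obtain ⟨x, hxS, hmax⟩ := hcpt.exists_isMaxOn hne hQc.continuousOn
  refine ⟨x, hxS, ?_⟩
  rw [lamP_def]
  symm
  apply IsGreatest.csSup_eq
  constructor
  · exact ⟨x, hxS, rfl⟩
  · rintro t ⟨y, hy, rfl⟩
    exact hmax hy

end S18

open S18

/-- For p > 2 and a nonnegative symmetric block-diagonal matrix
with blocks A₁,…,A_k, λ^{(p)}(A) = (∑ λ^{(p)}(A_i)^{p/(p-2)})^{(p-2)/p}. -/
theorem stmt_18 (k : ℕ) (n : Fin k → ℕ) (p : ℝ) (hp : 2 < p)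
    (B : ∀ i : Fin k, Matrix (Fin (n i)) (Fin (n i)) ℝ)
    (hsym : ∀ i, (B i).IsSymm) (hnn : ∀ i a b, 0 ≤ B i a b) :
    lamP p (Matrix.blockDiagonal' B) =
      (∑ i, (lamP p (B i)) ^ (p / (p - 2))) ^ ((p - 2) / p) := by
  classical
  have hp0 : (0:ℝ) < p := by linarith
  have hp2 : (0:ℝ) < p - 2 := by linarith
  set lam : Fin k → ℝ := fun i => lamP p (B i) with hlamdef
  have hlam0 : ∀ i, 0 ≤ lam i := by
    intro i
    rcases isEmpty_or_nonempty (Fin (n i)) with h | h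
    · exact le_of_eq (lamP_empty p (B i)).symm
    · exact lamP_nonneg hp0 (hnn i)
  set T := ∑ i, lam i ^ (p / (p - 2)) with hT
  have hT0 : 0 ≤ T := Finset.sum_nonneg fun i _ => Real.rpow_nonneg (hlam0 i) _
  -- sigma sum decomposition
  have hsig : ∀ f : (Σ i, Fin (n i)) → ℝ, (∑ σ, f σ) = ∑ i, ∑ a, f ⟨i, a⟩ := by
    intro f
    rw [← Finset.univ_sigma_univ, Finset.sum_sigma]
  -- Q decomposition
  have hQdec : ∀ x : (Σ i, Fin (n i)) → ℝ,
      Q (Matrix.blockDiagonal' B) x = ∑ i, Q (B i) (fun a => x ⟨i, a⟩) := by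
    intro x
    rw [Q, hsig]
    refine Finset.sum_congr rfl fun i _ => ?_
    rw [Q]
    refine Finset.sum_congr rfl fun a _ => ?_
    rw [hsig fun σ => Matrix.blockDiagonal' B ⟨i, a⟩ σ * x ⟨i, a⟩ * x σ]
    rw [Finset.sum_eq_single i]
    · exact Finset.sum_congr rfl fun b _ => by rw [Matrix.blockDiagonal'_apply_eq]
    · intro j _ hj
      refine Finset.sum_eq_zero fun b _ => ?_
      rw [Matrix.blockDiagonal'_apply_ne B a b (Ne.symm hj)]
      ring
    · simp
  -- upper bound
  have upper : lamP p (Matrix.blockDiagonal' B) ≤ T ^ ((p - 2) / p) := by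
    rw [lamP_def]
    apply Real.sSup_le
    · rintro t ⟨x, hx1, rfl⟩
      set s : Fin k → ℝ := fun i => ∑ a, |x ⟨i, a⟩| ^ p with hsdef
      have hs0 : ∀ i, 0 ≤ s i :=
        fun i => Finset.sum_nonneg fun a _ => Real.rpow_nonneg (abs_nonneg _) _
      have hssum : (∑ i, s i) = 1 := by
        rw [← hx1, hsig fun σ => |x σ| ^ p]
      have step1 : Q (Matrix.blockDiagonal' B) x ≤ ∑ i, lam i * s i ^ (2 / p) := by
        rw [hQdec]
        exact Finset.sum_le_sum fun i _ => Q_le hp0 (hlam0 i) _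
      have hpq : (p / (p - 2)).HolderConjugate (p / 2) := by
        rw [Real.holderConjugate_iff]
        constructor
        · rw [lt_div_iff₀ hp2]; linarith
        · rw [inv_div, inv_div]; field_simp; ring
      have step2 : (∑ i, lam i * s i ^ (2 / p)) ≤
          (∑ i, lam i ^ (p / (p - 2))) ^ (1 / (p / (p - 2))) *
          (∑ i, (s i ^ (2 / p)) ^ (p / 2)) ^ (1 / (p / 2)) :=
        Real.inner_le_Lp_mul_Lq_of_nonneg univ hpq (fun i _ => hlam0 i)
          (fun i _ => Real.rpow_nonneg (hs0 i) _)
      have hss : ∀ i, (s i ^ (2 / p)) ^ (p / 2) = s i := by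
        intro i
        rw [← Real.rpow_mul (hs0 i)]
        rw [show 2 / p * (p / 2) = 1 by field_simp]
        exact Real.rpow_one _
      have hexp1 : 1 / (p / (p - 2)) = (p - 2) / p := one_div_div _ _
      rw [hexp1] at step2
      simp_rw [hss] at step2
      rw [hssum, Real.one_rpow, mul_one] at step2
      exact le_trans step1 step2
    · exact Real.rpow_nonneg hT0 _
  -- nonneg entries of blockDiagonal'
  have hAnn : ∀ a b : (Σ i, Fin (n i)), 0 ≤ Matrix.blockDiagonal' B a b := by
    rintro ⟨i, a⟩ ⟨j, b⟩
    rcases eq_or_ne i j with rfl | hij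
    · rw [Matrix.blockDiagonal'_apply_eq]; exact hnn i a b
    · rw [Matrix.blockDiagonal'_apply_ne B a b hij]
  -- lower bound
  have lower : T ^ ((p - 2) / p) ≤ lamP p (Matrix.blockDiagonal' B) := by
    rcases eq_or_lt_of_le hT0 with h0 | hTpos
    · rw [← h0, Real.zero_rpow (by positivity)]
      rcases isEmpty_or_nonempty (Σ i, Fin (n i)) with h | h
      · exact le_of_eq (lamP_empty p _).symm
      · exact lamP_nonneg hp0 hAnn
    · -- choose maximizers
      have hy : ∀ i, ∃ y : Fin (n i) → ℝ,
          (lam i ^ (p / (p - 2)) / T) * (∑ a, |y a| ^ p) = lam i ^ (p / (p - 2)) / T ∧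
          Q (B i) y = lam i := by
        intro i
        rcases isEmpty_or_nonempty (Fin (n i)) with h | h
        · refine ⟨0, ?_, ?_⟩
          · have hli : lam i = 0 := lamP_empty p (B i)
            rw [hli, Real.zero_rpow (by positivity)]
            simp
          · have hli : lam i = 0 := lamP_empty p (B i)
            rw [Q, hli]; simp
        · obtain ⟨y, hy1, hy2⟩ := lamP_attained hp0 (B i)
          exact ⟨y, by rw [hy1, mul_one], hy2⟩
      choose y hy1 hy2 using hy
      set c : Fin k → ℝ := fun i => lam i ^ (p / (p - 2)) / T with hcdef
      have hc0 : ∀ i, 0 ≤ c i := fun i => div_nonneg (Real.rpow_nonneg (hlam0 i) _) hT0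
      have hcsum : (∑ i, c i) = 1 := by
        rw [hcdef, ← Finset.sum_div, ← hT, div_self hTpos.ne']
      set x : (Σ i, Fin (n i)) → ℝ := fun σ => c σ.1 ^ (1 / p) * y σ.1 σ.2 with hxdef
      have hcpow : ∀ i, (c i ^ (1 / p)) ^ p = c i := by
        intro i
        rw [← Real.rpow_mul (hc0 i), one_div, inv_mul_cancel₀ hp0.ne', Real.rpow_one]
      have hxnorm : (∑ σ, |x σ| ^ p) = 1 := by
        rw [hsig]
        have : ∀ i, (∑ a, |x ⟨i, a⟩| ^ p) = c i * ∑ a, |y i a| ^ p := by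
          intro i
          rw [Finset.mul_sum]
          refine Finset.sum_congr rfl fun a _ => ?_
          rw [hxdef]
          rw [abs_mul, Real.mul_rpow (abs_nonneg _) (abs_nonneg _),
            abs_of_nonneg (Real.rpow_nonneg (hc0 i) _), hcpow i]
        simp_rw [this]
        calc (∑ i, c i * ∑ a, |y i a| ^ p) = ∑ i, c i := by
              refine Finset.sum_congr rfl fun i _ => ?_
              exact hy1 i
          _ = 1 := hcsum
      have hQx : Q (Matrix.blockDiagonal' B) x = ∑ i, c i ^ (2 / p) * lam i := by
        rw [hQdec]
        refine Finset.sum_congr rfl fun i _ => ?_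
        have hQscale : Q (B i) (fun a => x ⟨i, a⟩) = (c i ^ (1 / p)) ^ 2 * Q (B i) (y i) := by
          rw [Q, Q, Finset.mul_sum]
          refine Finset.sum_congr rfl fun a _ => ?_
          rw [Finset.mul_sum]
          refine Finset.sum_congr rfl fun b _ => ?_
          rw [hxdef]
          ring
        rw [hQscale, hy2 i]
        congr 1
        rw [← Real.rpow_natCast (c i ^ (1/p)) 2, ← Real.rpow_mul (hc0 i)]
        norm_num
        rw [show p⁻¹ * 2 = 2 / p by ring]
      have hsumval : (∑ i, c i ^ (2 / p) * lam i) = T ^ ((p - 2) / p) := by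
        have hterm : ∀ i, c i ^ (2 / p) * lam i = lam i ^ (p / (p - 2)) / T ^ (2 / p) := by
          intro i
          have hci : c i = lam i ^ (p / (p - 2)) / T := rfl
          rw [hci]
          rw [Real.div_rpow (Real.rpow_nonneg (hlam0 i) _) hT0,
            ← Real.rpow_mul (hlam0 i)]
          rw [show p / (p - 2) * (2 / p) = 2 / (p - 2) by field_simp]
          rw [div_mul_eq_mul_div]
          congr 1
          rw [show p / (p - 2) = 2 / (p - 2) + 1 by field_simp; ring]
          rw [Real.rpow_add' (hlam0 i) (by positivity), Real.rpow_one]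
        simp_rw [hterm]
        rw [← Finset.sum_div, ← hT]
        rw [show (p - 2) / p = 1 - 2 / p by field_simp, Real.rpow_sub hTpos,
          Real.rpow_one]
      have hmem := Q_mem_le hp0 (Matrix.blockDiagonal' B) hxnorm
      rw [hQx, hsumval] at hmem
      exact hmem
  linarith
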